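/- Let T > 0, n a positive integer, ε = T/n, t_k = kε, τ(t) = t_k and τ̄(t) = t_{k+1} for t ∈ [t_k, t_{k+1}). Let g : [0,T] → ℝ be integrable. Then ∫₀^{t_K} ∫_{τ(t)}^{t} g(s) ds dt = ∫₀^{t_K} (τ̄(t) − t) g(t) dt for every K ∈ {0,…,n}. -/

import Mathlib

open MeasureTheory Set

lemma fubini_aux (a b : ℝ) (hab : a ≤ b) (g : ℝ → ℝ)
    (hg : IntegrableOn g (Ioc a b)) :
    ∫ t in Ioc a b, (∫ s in Ioc a t, g s) = ∫ t in Ioc a b, (b - t) * g t := by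
  set μ := volume.restrict (Ioc a b) with hμ
  haveI : IsFiniteMeasure μ := by
    constructor
    rw [hμ, Measure.restrict_apply_univ]
    exact (measure_Ioc_lt_top)
  set F : ℝ → ℝ → ℝ := fun t s => if s ≤ t then g s else 0 with hF
  have hmset : MeasurableSet {p : ℝ × ℝ | p.2 ≤ p.1} :=
    measurableSet_le measurable_snd measurable_fst
  have hgsm : AEStronglyMeasurable (fun p : ℝ × ℝ => g p.2) (μ.prod μ) :=
    hg.aestronglyMeasurable.comp_snd
  have hFsm : AEStronglyMeasurable (Function.uncurry F) (μ.prod μ) := by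
    have : Function.uncurry F = {p : ℝ × ℝ | p.2 ≤ p.1}.indicator (fun p => g p.2) := by
      ext p
      simp [Function.uncurry, hF, Set.indicator_apply]
    rw [this]
    exact hgsm.indicator hmset
  have hFint : Integrable (Function.uncurry F) (μ.prod μ) := by
    have hgint : Integrable (fun p : ℝ × ℝ => g p.2) (μ.prod μ) := by
      rw [integrable_prod_iff hgsm]
      refine ⟨Filter.Eventually.of_forall fun t => ?_, ?_⟩
      · exact hg
      · simp only [Real.norm_eq_abs]
        exact integrable_const _
    refine hgint.norm.mono' hFsm ?_
    refine Filter.Eventually.of_forall fun p => ?_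
    simp only [Function.uncurry, hF, Real.norm_eq_abs]
    split <;> simp [abs_nonneg]
  have swap := integral_integral_swap (f := F) hFint
  have lhs_eq : ∫ t, (∫ s, F t s ∂μ) ∂μ = ∫ t in Ioc a b, (∫ s in Ioc a t, g s) := by
    refine integral_congr_ae ?_
    filter_upwards [ae_restrict_mem measurableSet_Ioc] with t ht
    have : (fun s => F t s) = (Iic t).indicator g := by
      ext s; simp [hF, Set.indicator_apply]
    rw [this, hμ, integral_indicator measurableSet_Iic,
      Measure.restrict_restrict measurableSet_Iic]
    congr 1
    rw [Set.Iic_inter_Ioc_of_le ht.2]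
  have rhs_eq : ∫ s, (∫ t, F t s ∂μ) ∂μ = ∫ t in Ioc a b, (b - t) * g t := by
    refine integral_congr_ae ?_
    filter_upwards [ae_restrict_mem measurableSet_Ioc] with s hs
    have : (fun t => F t s) = (Ici s).indicator (fun _ => g s) := by
      ext t; simp [hF, Set.indicator_apply]
    rw [this, hμ, integral_indicator measurableSet_Ici,
      Measure.restrict_restrict measurableSet_Ici, setIntegral_const]
    have : Ici s ∩ Ioc a b = Icc s b := by
      ext x
      simp only [mem_inter_iff, mem_Ici, mem_Ioc, mem_Icc]
      constructor
      · rintro ⟨h1, _, h3⟩; exact ⟨h1, h3⟩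
      · rintro ⟨h1, h2⟩; exact ⟨h1, lt_of_lt_of_le hs.1 h1, h2⟩
    rw [this, Real.volume_real_Icc_of_le (by linarith [hs.2] : s ≤ b)]
    rw [smul_eq_mul]
  rw [lhs_eq, rhs_eq] at swap
  exact swap

lemma piece_eq (a b : ℝ) (hab : a ≤ b) (g : ℝ → ℝ) (hg : IntervalIntegrable g volume a b)
    (τ τ' : ℝ → ℝ) (hτ : ∀ t ∈ Ico a b, τ t = a) (hτ' : ∀ t ∈ Ico a b, τ' t = b) :
    IntervalIntegrable (fun t => ∫ s in (τ t)..t, g s) volume a b ∧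
    IntervalIntegrable (fun t => (τ' t - t) * g t) volume a b ∧
    ∫ t in a..b, (∫ s in (τ t)..t, g s) = ∫ t in a..b, (τ' t - t) * g t := by
  have hgI : IntegrableOn g (Ioc a b) := hg.1
  have hIcc : IntegrableOn g (Icc a b) := (integrableOn_Icc_iff_integrableOn_Ioc).mpr hgI
  have hbne : ∀ᵐ t ∂(volume.restrict (Ioc a b)), t ≠ b :=
    ae_restrict_of_ae (by rw [ae_iff]; simpa using measure_singleton b)
  have hmem : ∀ᵐ t ∂(volume.restrict (Ioc a b)), t ∈ Ioc a b :=
    ae_restrict_mem measurableSet_Ioc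
  have hae1 : (fun t => ∫ s in (τ t)..t, g s)
      =ᶠ[ae (volume.restrict (Ioc a b))] (fun t => ∫ s in Ioc a t, g s) := by
    filter_upwards [hbne, hmem] with t hne ht
    rw [hτ t ⟨ht.1.le, lt_of_le_of_ne ht.2 hne⟩, intervalIntegral.integral_of_le ht.1.le]
  have hae2 : (fun t => (τ' t - t) * g t)
      =ᶠ[ae (volume.restrict (Ioc a b))] (fun t => (b - t) * g t) := by
    filter_upwards [hbne, hmem] with t hne ht
    rw [hτ' t ⟨ht.1.le, lt_of_le_of_ne ht.2 hne⟩]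
  have hFc : ContinuousOn (fun x => ∫ s in Ioc a x, g s) (Icc a b) :=
    intervalIntegral.continuousOn_primitive hIcc
  have hFint : IntegrableOn (fun x => ∫ s in Ioc a x, g s) (Ioc a b) :=
    (hFc.integrableOn_compact isCompact_Icc).mono_set Ioc_subset_Icc_self
  have hGint : IntegrableOn (fun t => (b - t) * g t) (Ioc a b) :=
    (hIcc.continuousOn_mul (by fun_prop) isCompact_Icc).mono_set Ioc_subset_Icc_self
  have h1 : IntervalIntegrable (fun t => ∫ s in (τ t)..t, g s) volume a b := by
    rw [intervalIntegrable_iff_integrableOn_Ioc_of_le hab]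
    exact hFint.congr hae1.symm
  have h2 : IntervalIntegrable (fun t => (τ' t - t) * g t) volume a b := by
    rw [intervalIntegrable_iff_integrableOn_Ioc_of_le hab]
    exact hGint.congr hae2.symm
  refine ⟨h1, h2, ?_⟩
  rw [intervalIntegral.integral_of_le hab, intervalIntegral.integral_of_le hab,
    integral_congr_ae hae1, integral_congr_ae hae2]
  exact fubini_aux a b hab g hgI

theorem stmt_7 (T : ℝ) (hT : 0 < T) (n : ℕ) (hn : 0 < n) (ε : ℝ) (hε : ε = T / n)
    (τ τ' : ℝ → ℝ)
    (hτ : ∀ k : ℕ, k < n → ∀ t ∈ Ico ((k:ℝ)*ε) (((k:ℝ)+1)*ε), τ t = (k:ℝ)*ε)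
    (hτ' : ∀ k : ℕ, k < n → ∀ t ∈ Ico ((k:ℝ)*ε) (((k:ℝ)+1)*ε), τ' t = ((k:ℝ)+1)*ε)
    (g : ℝ → ℝ) (hg : IntervalIntegrable g volume 0 T) :
    ∀ K : ℕ, K ≤ n →
      ∫ t in (0:ℝ)..((K:ℝ)*ε), (∫ s in (τ t)..t, g s)
        = ∫ t in (0:ℝ)..((K:ℝ)*ε), (τ' t - t) * g t := by
  have hn' : (0:ℝ) < n := Nat.cast_pos.mpr hn
  have hε0 : 0 < ε := by rw [hε]; positivity
  have hTeq : (n:ℝ) * ε = T := by rw [hε]; field_simp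
  have key : ∀ K : ℕ, K ≤ n →
      IntervalIntegrable (fun t => ∫ s in (τ t)..t, g s) volume 0 ((K:ℝ)*ε) ∧
      IntervalIntegrable (fun t => (τ' t - t) * g t) volume 0 ((K:ℝ)*ε) ∧
      ∫ t in (0:ℝ)..((K:ℝ)*ε), (∫ s in (τ t)..t, g s)
        = ∫ t in (0:ℝ)..((K:ℝ)*ε), (τ' t - t) * g t := by
    intro K
    induction K with
    | zero =>
      intro _
      simp only [Nat.cast_zero, zero_mul]
      exact ⟨IntervalIntegrable.refl, IntervalIntegrable.refl, by simp⟩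
    | succ K ih =>
      intro hK
      simp only [Nat.cast_add, Nat.cast_one]
      obtain ⟨ih1, ih2, ih3⟩ := ih (Nat.le_of_succ_le hK)
      have hKn : K < n := hK
      have hab : (K:ℝ)*ε ≤ ((K:ℝ)+1)*ε := by nlinarith
      have hsub : IntervalIntegrable g volume ((K:ℝ)*ε) (((K:ℝ)+1)*ε) := by
        apply hg.mono_set
        rw [uIcc_of_le hab, uIcc_of_le hT.le]
        apply Icc_subset_Icc (mul_nonneg (Nat.cast_nonneg K) hε0.le)
        calc ((K:ℝ)+1)*ε ≤ (n:ℝ)*ε := by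
              have : (K:ℝ)+1 ≤ (n:ℝ) := by exact_mod_cast hK
              nlinarith
          _ = T := hTeq
      obtain ⟨p1, p2, p3⟩ := piece_eq ((K:ℝ)*ε) (((K:ℝ)+1)*ε) hab g hsub τ τ'
        (hτ K hKn) (hτ' K hKn)
      exact ⟨ih1.trans p1, ih2.trans p2, by
        rw [← intervalIntegral.integral_add_adjacent_intervals ih1 p1,
          ← intervalIntegral.integral_add_adjacent_intervals ih2 p2, ih3, p3]⟩
  intro K hK
  exact (key K hK).2.2
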